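/- Let n ≥ 3 and P = ℚ[X₁,…,X_{2n}]. Let 𝔟⁺ be the ideal of P generated by all Xᵢ² (i = 1,…,2n) and all e_{n−1}(Xᵢ : i ∈ {1} ∪ T) for subsets T ⊆ {2,…,2n} with |T| = n−1, where e_{n−1} is the elementary symmetric polynomial of degree n−1. Then the images in P/𝔟⁺ of the monomials X₁·∏_{j∈K} X_j, where K ranges over all subsets of {2,…,2n} with |K| = n−2, are linearly independent over ℚ. -/
import Mathlib


open MvPolynomial Finset

noncomputable section

/-- e_j(Xᵢ : i ∈ I), the elementary symmetric polynomial in the variables indexed by I. -/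
def esF {N : ℕ} (I : Finset (Fin N)) (j : ℕ) : MvPolynomial (Fin N) ℚ :=
  ∑ J ∈ powersetCard j I, ∏ i ∈ J, X i

namespace Stmt17Aux

variable {N : ℕ}

/-- The 0/1 exponent vector of a squarefree monomial with support `S`. -/
def uS (S : Finset (Fin N)) : Fin N →₀ ℕ := ∑ i ∈ S, Finsupp.single i 1

lemma uS_apply (S : Finset (Fin N)) (i : Fin N) : uS S i = if i ∈ S then 1 else 0 := by
  classical
  simp [uS, Finsupp.finset_sum_apply, Finsupp.single_apply]

lemma uS_le_iff (S T : Finset (Fin N)) : uS S ≤ uS T ↔ S ⊆ T := by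
  classical
  rw [Finsupp.le_def]
  constructor
  · intro h i hi
    have := h i
    rw [uS_apply, uS_apply, if_pos hi] at this
    by_contra hiT
    rw [if_neg hiT] at this
    omega
  · intro h i
    rw [uS_apply, uS_apply]
    by_cases hi : i ∈ S
    · rw [if_pos hi, if_pos (h hi)]
    · simp [hi]

lemma uS_inj_iff (S T : Finset (Fin N)) : uS S = uS T ↔ S = T := by
  constructor
  · intro h
    ext i
    have := DFunLike.congr_fun h i
    rw [uS_apply, uS_apply] at this
    by_cases hS : i ∈ S <;> by_cases hT : i ∈ T <;> simp [hS, hT] at this ⊢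
  · rintro rfl; rfl

lemma prod_X_uS (S : Finset (Fin N)) :
    (∏ i ∈ S, X i : MvPolynomial (Fin N) ℚ) = monomial (uS S) 1 := by
  classical
  induction S using Finset.induction with
  | empty => simp [uS]
  | @insert a s ha ih =>
      rw [Finset.prod_insert ha, ih]
      have : (X a : MvPolynomial (Fin N) ℚ) = monomial (Finsupp.single a 1) 1 := rfl
      rw [this, monomial_mul, one_mul]
      congr 1
      rw [uS, uS, Finset.sum_insert ha]

/-- The correction index set. -/
def corr (i0 : Fin N) (S : Finset (Fin N)) (m : ℕ) : Finset (Finset (Fin N)) := by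
  classical
  exact (Finset.univ.powersetCard m).filter (fun T => i0 ∉ T ∧ S.erase i0 ⊆ T)

lemma mem_corr {i0 : Fin N} {S T : Finset (Fin N)} {m : ℕ} :
    T ∈ corr i0 S m ↔ T.card = m ∧ i0 ∉ T ∧ S.erase i0 ⊆ T := by
  classical
  simp [corr, Finset.mem_filter, Finset.mem_powersetCard]

/-- The separating linear functional. -/
def Lam (i0 : Fin N) (S : Finset (Fin N)) (m : ℕ) : MvPolynomial (Fin N) ℚ →ₗ[ℚ] ℚ :=
  lcoeff ℚ (uS S) - ∑ T ∈ corr i0 S m, lcoeff ℚ (uS T)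

lemma Lam_apply (i0 : Fin N) (S : Finset (Fin N)) (m : ℕ) (f : MvPolynomial (Fin N) ℚ) :
    Lam i0 S m f = coeff (uS S) f - ∑ T ∈ corr i0 S m, coeff (uS T) f := by
  simp [Lam, lcoeff_apply]

lemma coeff_uS_mul_sq (T : Finset (Fin N)) (g : MvPolynomial (Fin N) ℚ) (i : Fin N) :
    coeff (uS T) (g * X i ^ 2) = 0 := by
  rw [X_pow_eq_monomial, coeff_mul_monomial', if_neg]
  intro h
  rw [Finsupp.le_def] at h
  have := h i
  rw [uS_apply] at this
  simp only [Finsupp.single_eq_same] at this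
  by_cases hi : i ∈ T <;> simp [hi] at this

lemma Lam_mul_sq (i0 : Fin N) (S : Finset (Fin N)) (m : ℕ)
    (g : MvPolynomial (Fin N) ℚ) (i : Fin N) :
    Lam i0 S m (g * X i ^ 2) = 0 := by
  rw [Lam_apply, coeff_uS_mul_sq]
  rw [Finset.sum_congr rfl (fun T _ => coeff_uS_mul_sq T g i)]
  simp

lemma coeff_uS_mul_esF (S I : Finset (Fin N)) (m : ℕ) (hS : S.card = m)
    (g : MvPolynomial (Fin N) ℚ) :
    coeff (uS S) (g * esF I m) = if S ⊆ I then coeff 0 g else 0 := by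
  classical
  rw [esF, Finset.mul_sum, coeff_sum]
  have hterm : ∀ J ∈ powersetCard m I,
      coeff (uS S) (g * ∏ i ∈ J, X i) = if J = S then coeff 0 g else 0 := by
    intro J hJ
    obtain ⟨hJI, hJc⟩ := Finset.mem_powersetCard.mp hJ
    rw [prod_X_uS, coeff_mul_monomial']
    by_cases hJS : J = S
    · subst hJS
      rw [if_pos le_rfl, if_pos rfl, tsub_self, mul_one]
    · rw [if_neg, if_neg hJS]
      rw [uS_le_iff]
      intro hsub
      exact hJS (Finset.eq_of_subset_of_card_le hsub (by omega))
  rw [Finset.sum_congr rfl hterm, Finset.sum_ite_eq' (powersetCard m I) S (fun _ => coeff 0 g)]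
  simp [Finset.mem_powersetCard, hS]

lemma Lam_mul_esF (i0 : Fin N) (S T : Finset (Fin N)) (m : ℕ)
    (hS : S.card = m) (hi0S : i0 ∈ S) (hT : i0 ∉ T) (hTc : T.card = m)
    (g : MvPolynomial (Fin N) ℚ) :
    Lam i0 S m (g * esF (insert i0 T) m) = 0 := by
  classical
  rw [Lam_apply]
  have key1 : coeff (uS S) (g * esF (insert i0 T) m)
      = if S.erase i0 ⊆ T then coeff 0 g else 0 := by
    rw [coeff_uS_mul_esF _ _ _ hS]
    congr 1
    exact propext Finset.subset_insert_iff
  have key2 : ∀ T' ∈ corr i0 S m,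
      coeff (uS T') (g * esF (insert i0 T) m) = if T' = T then coeff 0 g else 0 := by
    intro T' hT'
    obtain ⟨hT'c, hT'i0, _⟩ := mem_corr.mp hT'
    rw [coeff_uS_mul_esF _ _ _ hT'c]
    congr 1
    apply propext
    constructor
    · intro hsub
      have hsub' : T' ⊆ T := (Finset.subset_insert_iff_of_notMem hT'i0).mp hsub
      exact Finset.eq_of_subset_of_card_le hsub' (by omega)
    · rintro rfl
      exact Finset.subset_insert _ _
  rw [key1, Finset.sum_congr rfl key2,
    Finset.sum_ite_eq' (corr i0 S m) T (fun _ => coeff 0 g)]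
  have hTcorr : T ∈ corr i0 S m ↔ S.erase i0 ⊆ T := by
    rw [mem_corr]
    tauto
  by_cases h : S.erase i0 ⊆ T
  · rw [if_pos h, if_pos (hTcorr.mpr h), sub_self]
  · rw [if_neg h, if_neg (fun hc => h (hTcorr.mp hc)), sub_self]

lemma Lam_monomial (i0 : Fin N) (S K : Finset (Fin N)) (m : ℕ) (hK : i0 ∉ K) :
    Lam i0 S m (X i0 * ∏ k ∈ K, X k) = if insert i0 K = S then 1 else 0 := by
  classical
  rw [Lam_apply]
  have hprod : (X i0 * ∏ k ∈ K, X k : MvPolynomial (Fin N) ℚ)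
      = monomial (uS (insert i0 K)) 1 := by
    rw [← Finset.prod_insert hK, prod_X_uS]
  rw [hprod]
  have h1 : coeff (uS S) (monomial (uS (insert i0 K)) (1 : ℚ))
      = if insert i0 K = S then 1 else 0 := by
    rw [coeff_monomial]
    congr 1
    exact propext (uS_inj_iff _ _)
  have h2 : ∀ T ∈ corr i0 S m,
      coeff (uS T) (monomial (uS (insert i0 K)) (1 : ℚ)) = 0 := by
    intro T hT
    obtain ⟨_, hTi0, _⟩ := mem_corr.mp hT
    rw [coeff_monomial, if_neg]
    intro hc
    rw [uS_inj_iff] at hc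
    exact hTi0 (hc ▸ Finset.mem_insert_self i0 K)
  rw [h1, Finset.sum_congr rfl h2]
  simp

end Stmt17Aux

open Stmt17Aux

/-- Step in the proof of Theorem 6.1: the images in ℬ⁺ of the monomials
X₁·∏_{j∈K} X_j, with K ⊆ {2,…,2n} and |K| = n−2, are linearly independent over ℚ. -/
theorem stmt17 (n : ℕ) (hn : 3 ≤ n)
    (b : Ideal (MvPolynomial (Fin (2 * n)) ℚ))
    (hb : b = Ideal.span
      ({f | ∃ i : Fin (2 * n), f = X i ^ 2} ∪
       {f | ∃ T : Finset (Fin (2 * n)), (⟨0, by omega⟩ : Fin (2 * n)) ∉ T ∧ T.card = n - 1 ∧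
          f = esF (insert (⟨0, by omega⟩ : Fin (2 * n)) T) (n - 1)})) :
    LinearIndependent ℚ
      (fun K : {K : Finset (Fin (2 * n)) //
          (⟨0, by omega⟩ : Fin (2 * n)) ∉ K ∧ K.card = n - 2} =>
        Ideal.Quotient.mk b (X (⟨0, by omega⟩ : Fin (2 * n)) * ∏ j ∈ K.1, X j)) := by
  classical
  set i0 : Fin (2 * n) := ⟨0, by omega⟩ with hi0def
  rw [linearIndependent_iff']
  intro s g hsum j hj
  -- the combination lies in the ideal
  have h0 : Ideal.Quotient.mkₐ ℚ b (∑ i ∈ s, g i • (X i0 * ∏ k ∈ i.1, X k)) = 0 := by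
    rw [map_sum]
    simp only [map_smul, Ideal.Quotient.mkₐ_eq_mk]
    exact hsum
  have hmem : (∑ i ∈ s, g i • (X i0 * ∏ k ∈ i.1, X k)) ∈ b := by
    rwa [Ideal.Quotient.mkₐ_eq_mk, Ideal.Quotient.eq_zero_iff_mem] at h0
  -- set up the separating functional
  set S : Finset (Fin (2 * n)) := insert i0 j.1 with hSdef
  have hi0S : i0 ∈ S := Finset.mem_insert_self _ _
  have hScard : S.card = n - 1 := by
    rw [hSdef, Finset.card_insert_of_notMem j.2.1, j.2.2]
    omega
  -- the functional vanishes on the ideal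
  have hideal : ∀ x ∈ b, Lam i0 S (n - 1) x = 0 := by
    intro x hx
    rw [hb] at hx
    have H : ∀ gg : MvPolynomial (Fin (2 * n)) ℚ, Lam i0 S (n - 1) (gg * x) = 0 := by
      refine Submodule.span_induction
        (p := fun y _ => ∀ gg : MvPolynomial (Fin (2 * n)) ℚ, Lam i0 S (n - 1) (gg * y) = 0)
        ?_ ?_ ?_ ?_ hx
      · rintro y hy gg
        rcases hy with ⟨i, rfl⟩ | ⟨T, hT1, hT2, rfl⟩
        · exact Lam_mul_sq i0 S (n - 1) gg i
        · exact Lam_mul_esF i0 S T (n - 1) hScard hi0S hT1 hT2 gg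
      · intro gg; simp
      · intro x y _ _ ihx ihy gg
        rw [mul_add, map_add, ihx, ihy, add_zero]
      · intro r x _ ih gg
        rw [smul_eq_mul, ← mul_assoc]
        exact ih (gg * r)
    simpa using H 1
  have hvan : Lam i0 S (n - 1) (∑ i ∈ s, g i • (X i0 * ∏ k ∈ i.1, X k)) = 0 :=
    hideal _ hmem
  rw [map_sum] at hvan
  simp only [map_smul] at hvan
  have hterm : ∀ i ∈ s,
      g i • Lam i0 S (n - 1) (X i0 * ∏ k ∈ i.1, X k) = if i = j then g i else 0 := by
    intro i hi
    rw [Lam_monomial i0 S i.1 (n - 1) i.2.1]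
    have : (insert i0 i.1 = S) ↔ i = j := by
      constructor
      · intro h
        apply Subtype.ext
        have h1 : (insert i0 i.1).erase i0 = S.erase i0 := by rw [h]
        rw [Finset.erase_insert i.2.1, hSdef, Finset.erase_insert j.2.1] at h1
        exact h1
      · rintro rfl
        rfl
    rw [if_congr this rfl rfl]
    by_cases h : i = j <;> simp [h]
  rw [Finset.sum_congr rfl hterm, Finset.sum_ite_eq' s j g, if_pos hj] at hvan
  exact hvan

end
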